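/- If f' ⊂ Ξ_{Φ'} and f'' ⊂ Ξ_{Φ''} are regular asynchronous systems with input sets U', U'' satisfying U' ∩ U'' ≠ ∅, then the parallel connection f'||f'', defined on U' ∩ U'' by (f'||f'')(u) = f'(u) × f''(u), is regular with generator function Φ'||Φ'': that is, (f'||f'')(u) ⊆ Ξ_{Φ'||Φ''}(u) for all u ∈ U' ∩ U''. Its initial state function is u ↦ φ'_0(u) × φ''_0(u) and its computation function is ((μ',μ''),u) ↦ π'(μ',u) × π''(μ'',u). -/

import Mathlib

open scoped Classical

namespace AS

/-- A sequence `α : ℕ → 𝔹ⁿ` is progressive if every coordinate takes the value 1 infinitely often. -/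
def ProgSeq {n : ℕ} (α : ℕ → Fin n → Bool) : Prop :=
  ∀ i : Fin n, {k : ℕ | α k i = true}.Infinite

/-- Identification of `𝔹^{n'} × 𝔹^{n''}` with `𝔹^{n'+n''}`. -/
def app {n' n'' : ℕ} (x : Fin n' → Bool) (y : Fin n'' → Bool) : Fin (n' + n'') → Bool :=
  Fin.addCases x y

/-- The first `n'` coordinates. -/
def fstPart {n' n'' : ℕ} (μ : Fin (n' + n'') → Bool) : Fin n' → Bool :=
  fun i => μ (Fin.castAdd n'' i)

/-- The last `n''` coordinates. -/
def sndPart {n' n'' : ℕ} (μ : Fin (n' + n'') → Bool) : Fin n'' → Bool :=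
  fun i => μ (Fin.natAdd n' i)

/-- Parallel connection of generator functions. -/
def par {n' n'' m : ℕ} (Φ' : (Fin n' → Bool) → (Fin m → Bool) → Fin n' → Bool)
    (Φ'' : (Fin n'' → Bool) → (Fin m → Bool) → Fin n'' → Bool) :
    (Fin (n' + n'') → Bool) → (Fin m → Bool) → Fin (n' + n'') → Bool :=
  fun μ lam => app (Φ' (fstPart μ) lam) (Φ'' (sndPart μ) lam)

/-- `μ` with coordinate `j` complemented. -/
def negAt {n : ℕ} (μ : Fin n → Bool) (j : Fin n) : Fin n → Bool :=
  Function.update μ j (!(μ j))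

/-- Boolean partial derivative of `Φ_i` with respect to `μ_j`. -/
def bderiv {n m : ℕ} (Φ : (Fin n → Bool) → (Fin m → Bool) → Fin n → Bool)
    (i j : Fin n) (μ : Fin n → Bool) (lam : Fin m → Bool) : Bool :=
  xor (Φ μ lam i) (Φ (negAt μ j) lam i)

/-- `Φ^ν`. -/
def nuAct {n m : ℕ} (Φ : (Fin n → Bool) → (Fin m → Bool) → Fin n → Bool)
    (ν μ : Fin n → Bool) (lam : Fin m → Bool) : Fin n → Bool :=
  fun i => xor ((!(ν i)) && μ i) (ν i && Φ μ lam i)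

/-- The iterates: `iter Φ α lam μ 0 = ω₋₁ = μ`, `iter Φ α lam μ (k+1) = ωₖ = Φ^{α k}(ω_{k-1}, lam k)`. -/
def iter {n m : ℕ} (Φ : (Fin n → Bool) → (Fin m → Bool) → Fin n → Bool)
    (α : ℕ → Fin n → Bool) (lam : ℕ → Fin m → Bool) (μ : Fin n → Bool) : ℕ → Fin n → Bool
  | 0 => μ
  | k + 1 => nuAct Φ (α k) (iter Φ α lam μ k) (lam k)

/-- A strictly increasing sequence of reals, unbounded from above. -/
def IsSeq (t : ℕ → ℝ) : Prop :=
  StrictMono t ∧ ∀ T : ℝ, ∃ k, T < t k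

/-- The function `ρ(s) = ⊕ₖ α(k)·χ_{{t_k}}(s)`. -/
noncomputable def progFun {n : ℕ} (α : ℕ → Fin n → Bool) (t : ℕ → ℝ) : ℝ → Fin n → Bool :=
  fun s i => decide (∃ k, s = t k ∧ α k i = true)

/-- A progressive function `ℝ → 𝔹ⁿ`. -/
def IsProgFun {n : ℕ} (ρ : ℝ → Fin n → Bool) : Prop :=
  ∃ α t, ProgSeq α ∧ IsSeq t ∧ ρ = progFun α t

/-- The data of a progressive function: a progressive sequence of vectors on an
unbounded strictly increasing support sequence. -/
structure PF (n : ℕ) where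
  α : ℕ → Fin n → Bool
  t : ℕ → ℝ
  mono : StrictMono t
  unbdd : ∀ T : ℝ, ∃ k, T < t k
  prog : ProgSeq α

/-- The underlying progressive function `ℝ → 𝔹ⁿ` of `ρ : PF n`. -/
noncomputable def PF.toFun {n : ℕ} (ρ : PF n) : ℝ → Fin n → Bool := progFun ρ.α ρ.t

/-- The signal `Φ^ρ(μ,u,·)`. -/
noncomputable def PF.run {n m : ℕ} (Φ : (Fin n → Bool) → (Fin m → Bool) → Fin n → Bool)
    (ρ : PF n) (μ : Fin n → Bool) (u : ℝ → Fin m → Bool) : ℝ → Fin n → Bool :=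
  fun s => iter Φ ρ.α (fun k => u (ρ.t k)) μ (Nat.find (ρ.unbdd s))

/-- The universal regular asynchronous system generated by `Φ`. -/
def Xi {n m : ℕ} (Φ : (Fin n → Bool) → (Fin m → Bool) → Fin n → Bool)
    (u : ℝ → Fin m → Bool) : Set (ℝ → Fin n → Bool) :=
  {x | ∃ (μ : Fin n → Bool) (ρ : PF n), x = PF.run Φ ρ μ u}

/-- `μ` is the initial value `x(-∞+0)` of `x`. -/
def InitVal {n : ℕ} (x : ℝ → Fin n → Bool) (μ : Fin n → Bool) : Prop :=
  ∃ T : ℝ, ∀ s < T, x s = μ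

/-- Projection of a progressive function onto the first `n'` coordinates. -/
def PF.fst {n' n'' : ℕ} (ρ : PF (n' + n'')) : PF n' :=
  ⟨fun k => fstPart (ρ.α k), ρ.t, ρ.mono, ρ.unbdd, fun i => ρ.prog (Fin.castAdd n'' i)⟩

/-- Projection of a progressive function onto the last `n''` coordinates. -/
def PF.snd {n' n'' : ℕ} (ρ : PF (n' + n'')) : PF n'' :=
  ⟨fun k => sndPart (ρ.α k), ρ.t, ρ.mono, ρ.unbdd, fun i => ρ.prog (Fin.natAdd n' i)⟩

/-- `x` is a signal: eventually constant to the left, piecewise constant on `[t_k, t_{k+1})`. -/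
def IsSignal {n : ℕ} (x : ℝ → Fin n → Bool) : Prop :=
  ∃ (μ : Fin n → Bool) (t : ℕ → ℝ), IsSeq t ∧ (∀ s, s < t 0 → x s = μ) ∧
    ∀ k, ∀ s, t k ≤ s → s < t (k + 1) → x s = x (t k)

/-! ### Auxiliary lemmas for the proof of `par_regular` -/

lemma fstPart_app {n' n'' : ℕ} (x : Fin n' → Bool) (y : Fin n'' → Bool) :
    fstPart (app x y) = x := by
  funext i; simp [fstPart, app]

lemma sndPart_app {n' n'' : ℕ} (x : Fin n' → Bool) (y : Fin n'' → Bool) :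
    sndPart (app x y) = y := by
  funext i; simp [sndPart, app]

lemma app_fstPart_sndPart {n' n'' : ℕ} (w : Fin (n' + n'') → Bool) :
    app (fstPart w) (sndPart w) = w := by
  funext i
  refine Fin.addCases (fun j => ?_) (fun j => ?_) i <;> simp [app, fstPart, sndPart]

lemma fstPart_nuAct {n' n'' m : ℕ}
    (Φ' : (Fin n' → Bool) → (Fin m → Bool) → Fin n' → Bool)
    (Φ'' : (Fin n'' → Bool) → (Fin m → Bool) → Fin n'' → Bool)
    (ν ω : Fin (n' + n'') → Bool) (lam : Fin m → Bool) :
    fstPart (nuAct (par Φ' Φ'') ν ω lam) = nuAct Φ' (fstPart ν) (fstPart ω) lam := by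
  funext i; simp [nuAct, fstPart, par, app]

lemma sndPart_nuAct {n' n'' m : ℕ}
    (Φ' : (Fin n' → Bool) → (Fin m → Bool) → Fin n' → Bool)
    (Φ'' : (Fin n'' → Bool) → (Fin m → Bool) → Fin n'' → Bool)
    (ν ω : Fin (n' + n'') → Bool) (lam : Fin m → Bool) :
    sndPart (nuAct (par Φ' Φ'') ν ω lam) = nuAct Φ'' (sndPart ν) (sndPart ω) lam := by
  funext i; simp [nuAct, sndPart, par, app]

lemma fstPart_iter {n' n'' m : ℕ}
    (Φ' : (Fin n' → Bool) → (Fin m → Bool) → Fin n' → Bool)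
    (Φ'' : (Fin n'' → Bool) → (Fin m → Bool) → Fin n'' → Bool)
    (α : ℕ → Fin (n' + n'') → Bool) (lam : ℕ → Fin m → Bool)
    (μ' : Fin n' → Bool) (μ'' : Fin n'' → Bool) (k : ℕ) :
    fstPart (iter (par Φ' Φ'') α lam (app μ' μ'') k)
      = iter Φ' (fun j => fstPart (α j)) lam μ' k := by
  induction k with
  | zero => simpa [iter] using fstPart_app μ' μ''
  | succ k ih => simp [iter, fstPart_nuAct, ih]

lemma sndPart_iter {n' n'' m : ℕ}
    (Φ' : (Fin n' → Bool) → (Fin m → Bool) → Fin n' → Bool)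
    (Φ'' : (Fin n'' → Bool) → (Fin m → Bool) → Fin n'' → Bool)
    (α : ℕ → Fin (n' + n'') → Bool) (lam : ℕ → Fin m → Bool)
    (μ' : Fin n' → Bool) (μ'' : Fin n'' → Bool) (k : ℕ) :
    sndPart (iter (par Φ' Φ'') α lam (app μ' μ'') k)
      = iter Φ'' (fun j => sndPart (α j)) lam μ'' k := by
  induction k with
  | zero => simpa [iter] using sndPart_app μ' μ''
  | succ k ih => simp [iter, sndPart_nuAct, ih]

/-- An unbounded, locally finite set of reals admits a strictly monotone unbounded
enumeration hitting all of its elements. -/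
lemma exists_enum (A : Set ℝ) (hfin : ∀ T : ℝ, (A ∩ Set.Iic T).Finite)
    (hub : ∀ a : ℝ, ∃ b ∈ A, a < b) :
    ∃ e : ℕ → ℝ, StrictMono e ∧ (∀ T : ℝ, ∃ k, T < e k) ∧ (∀ k, e k ∈ A) ∧
      ∀ b ∈ A, ∃ k, e k = b := by
  have hmin : ∀ a : ℝ, ∃ x, x ∈ A ∧ a < x ∧ ∀ b ∈ A, a < b → x ≤ b := by
    intro a
    obtain ⟨c, hcA, hac⟩ := hub a
    have hS : (A ∩ Set.Ioc a c).Finite :=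
      (hfin c).subset (fun x hx => ⟨hx.1, hx.2.2⟩)
    have hne : (A ∩ Set.Ioc a c).Nonempty := ⟨c, hcA, hac, le_refl c⟩
    obtain ⟨x, hx, hxmin⟩ := Set.exists_min_image _ id hS hne
    refine ⟨x, hx.1, hx.2.1, fun b hb hab => ?_⟩
    by_cases hbc : b ≤ c
    · exact hxmin b ⟨hb, hab, hbc⟩
    · exact (hxmin c ⟨hcA, hac, le_refl c⟩).trans (le_of_not_ge hbc)
  choose next hnA hnlt hnle using hmin
  have h0 : ∃ x, x ∈ A ∧ ∀ b ∈ A, x ≤ b := by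
    obtain ⟨c, hcA, _⟩ := hub 0
    have hS : (A ∩ Set.Iic c).Finite := hfin c
    have hne : (A ∩ Set.Iic c).Nonempty := ⟨c, hcA, le_refl c⟩
    obtain ⟨x, hx, hxmin⟩ := Set.exists_min_image _ id hS hne
    refine ⟨x, hx.1, fun b hb => ?_⟩
    by_cases hbc : b ≤ c
    · exact hxmin b ⟨hb, hbc⟩
    · exact (hxmin c ⟨hcA, le_refl c⟩).trans (le_of_not_ge hbc)
  obtain ⟨e0, he0A, he0min⟩ := h0
  set e : ℕ → ℝ := fun k => Nat.rec e0 (fun _ x => next x) k with he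
  have hsucc : ∀ k, e (k + 1) = next (e k) := fun k => rfl
  have hmono : StrictMono e := strictMono_nat_of_lt_succ fun k => hnlt (e k)
  have hmem : ∀ k, e k ∈ A := by
    intro k; induction k with
    | zero => exact he0A
    | succ k _ => exact hnA (e k)
  have hunbdd : ∀ T : ℝ, ∃ k, T < e k := by
    intro T
    by_contra h
    push_neg at h
    have hsub : Set.range e ⊆ A ∩ Set.Iic T := by
      rintro x ⟨k, rfl⟩; exact ⟨hmem k, h k⟩
    exact (Set.infinite_range_of_injective hmono.injective) ((hfin T).subset hsub)
  refine ⟨e, hmono, hunbdd, hmem, ?_⟩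
  intro b hb
  obtain ⟨k0, hk0⟩ := hunbdd b
  have hex : ∃ k, b ≤ e k := ⟨k0, hk0.le⟩
  refine ⟨Nat.find hex, le_antisymm ?_ (Nat.find_spec hex)⟩
  rcases Nat.eq_zero_or_pos (Nat.find hex) with h0' | hpos
  · rw [h0']; exact he0min b hb
  · obtain ⟨j, hj⟩ := Nat.exists_eq_succ_of_ne_zero hpos.ne'
    have hjlt : e j < b :=
      lt_of_not_ge fun hle' => Nat.find_min hex (hj ▸ j.lt_succ_self) hle'
    rw [hj, hsucc]
    exact hnle (e j) b hb hjlt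

/-- Running along a refined time sequence `e` (containing all the times of `ρ`),
with the null action inserted at the extra times, computes the same signal. -/
lemma run_merge {n m : ℕ} (Φ : (Fin n → Bool) → (Fin m → Bool) → Fin n → Bool)
    (ρ : PF n) (e : ℕ → ℝ) (he : StrictMono e) (heu : ∀ T : ℝ, ∃ k, T < e k)
    (hsub : ∀ j, ∃ k, e k = ρ.t j) (μ : Fin n → Bool) (u : ℝ → Fin m → Bool) (s : ℝ) :
    iter Φ (fun k i => decide (∃ j, ρ.t j = e k ∧ ρ.α j i = true)) (fun k => u (e k)) μ
      (Nat.find (heu s)) = PF.run Φ ρ μ u s := by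
  set β : ℕ → Fin n → Bool :=
    fun k i => decide (∃ j, ρ.t j = e k ∧ ρ.α j i = true) with hβdef
  have hc : ∀ k : ℕ, ∃ j, e k ≤ ρ.t j := fun k => (ρ.unbdd (e k)).imp (fun _ h => h.le)
  set c : ℕ → ℕ := fun k => Nat.find (hc k) with hcdef
  have hcspec : ∀ k, e k ≤ ρ.t (c k) := fun k => Nat.find_spec (hc k)
  have hchar : ∀ k j, j < c k ↔ ρ.t j < e k := by
    intro k j
    constructor
    · intro h; exact lt_of_not_ge (Nat.find_min (hc k) h)
    · intro h
      by_contra hle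
      push_neg at hle
      exact absurd ((hcspec k).trans (ρ.mono.monotone hle)) (not_le.2 h)
  have hskip : ∀ k j, e k < ρ.t j → e (k + 1) ≤ ρ.t j := by
    intro k j h
    obtain ⟨k0, hk0⟩ := hsub j
    rw [← hk0] at h ⊢
    exact he.monotone (Nat.succ_le_of_lt (he.lt_iff_lt.1 h))
  have main : ∀ k, iter Φ β (fun k => u (e k)) μ k
      = iter Φ ρ.α (fun j => u (ρ.t j)) μ (c k) := by
    intro k
    induction k with
    | zero =>
      have hc0 : c 0 = 0 := by
        by_contra h
        have h0 : (0 : ℕ) < c 0 := Nat.pos_of_ne_zero (fun h' => h h')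
        have := (hchar 0 0).1 h0
        obtain ⟨k0, hk0⟩ := hsub 0
        exact absurd this (not_lt.2 (hk0 ▸ he.monotone (Nat.zero_le k0)))
      rw [hc0]; rfl
    | succ k ih =>
      by_cases hk : ∃ j, ρ.t j = e k
      · obtain ⟨j, hj⟩ := hk
        have hckj : c k = j := by
          refine le_antisymm (Nat.find_min' (hc k) hj.ge) (not_lt.1 fun h => ?_)
          have : ρ.t (c k) < e k := hj ▸ ρ.mono h
          exact absurd this (not_lt.2 (hcspec k))
        have hc1 : c (k + 1) = j + 1 := by
          refine le_antisymm (Nat.find_min' (hc (k + 1)) (hskip k (j + 1) ?_))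
            (Nat.succ_le_of_lt ((hchar (k + 1) j).2 ?_))
          · rw [← hj]; exact ρ.mono j.lt_succ_self
          · rw [hj]; exact he k.lt_succ_self
        have hβk : β k = ρ.α j := by
          funext i
          by_cases hα : ρ.α j i = true
          · rw [hα]; exact decide_eq_true ⟨j, hj, hα⟩
          · have hno : ¬ ∃ j0, ρ.t j0 = e k ∧ ρ.α j0 i = true := by
              rintro ⟨j0, h1, h2⟩
              exact hα (by rwa [ρ.mono.injective (h1.trans hj.symm)] at h2)
            show decide _ = _
            rw [decide_eq_false hno, eq_comm, ← Bool.not_eq_true]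
            exact hα
        show nuAct Φ (β k) (iter Φ β (fun k => u (e k)) μ k) (u (e k)) = _
        rw [hβk, ih, hckj, hc1, ← hj]
        rfl
      · have hβk : β k = fun _ => false := by
          funext i
          show decide _ = _
          exact decide_eq_false fun ⟨j0, h1, _⟩ => hk ⟨j0, h1⟩
        have hc1 : c (k + 1) = c k := by
          refine le_antisymm (Nat.find_min' (hc (k + 1)) (hskip k (c k) ?_))
            (Nat.find_min' (hc k) ((he.monotone k.le_succ).trans (hcspec (k + 1))))
          exact lt_of_le_of_ne (hcspec k) (fun h => hk ⟨c k, h.symm⟩)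
        show nuAct Φ (β k) (iter Φ β (fun k => u (e k)) μ k) (u (e k)) = _
        rw [hβk, ih, hc1]
        funext i
        simp [nuAct]
  have hN : c (Nat.find (heu s)) = Nat.find (ρ.unbdd s) := by
    refine le_antisymm ?_ ?_
    · obtain ⟨k0, hk0⟩ := hsub (Nat.find (ρ.unbdd s))
      refine Nat.find_min' (hc (Nat.find (heu s))) ?_
      rw [← hk0]
      exact he.monotone (Nat.find_min' (heu s) (hk0 ▸ Nat.find_spec (ρ.unbdd s)))
    · exact Nat.find_min' (ρ.unbdd s) ((Nat.find_spec (heu s)).trans_le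
        (hcspec (Nat.find (heu s))))
  rw [main, hN]
  rfl

lemma range_inter_Iic_finite {n : ℕ} (ρ : PF n) (T : ℝ) :
    (Set.range ρ.t ∩ Set.Iic T).Finite := by
  obtain ⟨N, hN⟩ := ρ.unbdd T
  apply ((Set.finite_Iio N).image ρ.t).subset
  rintro x ⟨⟨k, rfl⟩, hx⟩
  refine ⟨k, ?_, rfl⟩
  by_contra h
  simp only [Set.mem_Iio] at h
  exact absurd hx (not_le.2 (hN.trans_le (ρ.mono.monotone (not_lt.1 (fun h' => h h')))))

/-- Two progressive functions can be merged into one on the sum of coordinates, so that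
running the parallel generator along the merged function computes both runs componentwise. -/
lemma exists_merge {n' n'' : ℕ} (ρ' : PF n') (ρ'' : PF n'') :
    ∃ ρ : PF (n' + n''), ∀ {m : ℕ}
      (Φ' : (Fin n' → Bool) → (Fin m → Bool) → Fin n' → Bool)
      (Φ'' : (Fin n'' → Bool) → (Fin m → Bool) → Fin n'' → Bool)
      (μ' : Fin n' → Bool) (μ'' : Fin n'' → Bool) (u : ℝ → Fin m → Bool) (s : ℝ),
      PF.run (par Φ' Φ'') ρ (app μ' μ'') u s
        = app (PF.run Φ' ρ' μ' u s) (PF.run Φ'' ρ'' μ'' u s) := by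
  set A : Set ℝ := Set.range ρ'.t ∪ Set.range ρ''.t with hA
  have hfin : ∀ T : ℝ, (A ∩ Set.Iic T).Finite := by
    intro T
    rw [hA, Set.union_inter_distrib_right]
    exact (range_inter_Iic_finite ρ' T).union (range_inter_Iic_finite ρ'' T)
  have hub : ∀ a : ℝ, ∃ b ∈ A, a < b := by
    intro a
    obtain ⟨k, hk⟩ := ρ'.unbdd a
    exact ⟨ρ'.t k, Or.inl ⟨k, rfl⟩, hk⟩
  obtain ⟨e, hemono, heu, hmem, hsurj⟩ := exists_enum A hfin hub
  have hsub' : ∀ j, ∃ k, e k = ρ'.t j := fun j => hsurj _ (Or.inl ⟨j, rfl⟩)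
  have hsub'' : ∀ j, ∃ k, e k = ρ''.t j := fun j => hsurj _ (Or.inr ⟨j, rfl⟩)
  set β' : ℕ → Fin n' → Bool :=
    fun k i => decide (∃ j, ρ'.t j = e k ∧ ρ'.α j i = true) with hβ'
  set β'' : ℕ → Fin n'' → Bool :=
    fun k i => decide (∃ j, ρ''.t j = e k ∧ ρ''.α j i = true) with hβ''
  set αm : ℕ → Fin (n' + n'') → Bool := fun k => app (β' k) (β'' k) with hαm
  have hprog : ProgSeq αm := by
    intro i
    refine Fin.addCases (motive := fun i => Set.Infinite {k | αm k i = true})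
      (fun i' => ?_) (fun i'' => ?_) i
    · choose g hg using hsub'
      have hginj : Function.Injective g := fun a b hab =>
        ρ'.mono.injective (by rw [← hg a, ← hg b, hab])
      have hss : g '' {j | ρ'.α j i' = true} ⊆ {k | αm k (Fin.castAdd n'' i') = true} := by
        rintro k ⟨j, hj, rfl⟩
        show αm (g j) (Fin.castAdd n'' i') = true
        rw [hαm]
        simp only [app, Fin.addCases_left]
        exact decide_eq_true ⟨j, (hg j).symm, hj⟩
      exact Set.Infinite.mono hss ((ρ'.prog i').image (hginj.injOn))
    · choose g hg using hsub''
      have hginj : Function.Injective g := fun a b hab =>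
        ρ''.mono.injective (by rw [← hg a, ← hg b, hab])
      have hss : g '' {j | ρ''.α j i'' = true} ⊆ {k | αm k (Fin.natAdd n' i'') = true} := by
        rintro k ⟨j, hj, rfl⟩
        show αm (g j) (Fin.natAdd n' i'') = true
        rw [hαm]
        simp only [app, Fin.addCases_right]
        exact decide_eq_true ⟨j, (hg j).symm, hj⟩
      exact Set.Infinite.mono hss ((ρ''.prog i'').image (hginj.injOn))
  refine ⟨⟨αm, e, hemono, heu, hprog⟩, ?_⟩
  intro m Φ' Φ'' μ' μ'' u s
  have h1 : fstPart (PF.run (par Φ' Φ'') ⟨αm, e, hemono, heu, hprog⟩ (app μ' μ'') u s)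
      = PF.run Φ' ρ' μ' u s := by
    show fstPart (iter (par Φ' Φ'') αm (fun k => u (e k)) (app μ' μ'') (Nat.find (heu s))) = _
    rw [fstPart_iter]
    have heq : (fun j => fstPart (αm j)) = β' := funext fun j => fstPart_app (β' j) (β'' j)
    rw [heq]
    exact run_merge Φ' ρ' e hemono heu hsub' μ' u s
  have h2 : sndPart (PF.run (par Φ' Φ'') ⟨αm, e, hemono, heu, hprog⟩ (app μ' μ'') u s)
      = PF.run Φ'' ρ'' μ'' u s := by
    show sndPart (iter (par Φ' Φ'') αm (fun k => u (e k)) (app μ' μ'') (Nat.find (heu s))) = _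
    rw [sndPart_iter]
    have heq : (fun j => sndPart (αm j)) = β'' := funext fun j => sndPart_app (β' j) (β'' j)
    rw [heq]
    exact run_merge Φ'' ρ'' e hemono heu hsub'' μ'' u s
  rw [← h1, ← h2, app_fstPart_sndPart]

end AS

/-- The parallel connection `(f'||f'')(u) = f'(u) × f''(u)` of two sets of signals. -/
def prodSet {n' n'' : ℕ} (X' : Set (ℝ → Fin n' → Bool)) (X'' : Set (ℝ → Fin n'' → Bool)) :
    Set (ℝ → Fin (n' + n'') → Bool) :=
  {z | ∃ x' ∈ X', ∃ x'' ∈ X'', z = fun s => AS.app (x' s) (x'' s)}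

/-- if `f' ⊂ Ξ_{Φ'}` and `f'' ⊂ Ξ_{Φ''}` (with initial state functions `φ₀'`, `φ₀''`
and computation functions `π'`, `π''`) and `U' ∩ U'' ≠ ∅`, then `f'||f'' ⊂ Ξ_{Φ'||Φ''}`, its
initial state function is `φ₀'×φ₀''` and its computation function is `π'×π''`. -/
theorem par_regular {n' n'' m : ℕ}
    (Φ' : (Fin n' → Bool) → (Fin m → Bool) → Fin n' → Bool)
    (Φ'' : (Fin n'' → Bool) → (Fin m → Bool) → Fin n'' → Bool)
    (U' U'' : Set (ℝ → Fin m → Bool)) (hU : (U' ∩ U'').Nonempty)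
    (f' : (ℝ → Fin m → Bool) → Set (ℝ → Fin n' → Bool))
    (f'' : (ℝ → Fin m → Bool) → Set (ℝ → Fin n'' → Bool))
    (hreg' : ∀ u ∈ U', f' u ⊆ AS.Xi Φ' u) (hreg'' : ∀ u ∈ U'', f'' u ⊆ AS.Xi Φ'' u)
    (φ0' : (ℝ → Fin m → Bool) → Set (Fin n' → Bool))
    (φ0'' : (ℝ → Fin m → Bool) → Set (Fin n'' → Bool))
    (hφ0' : ∀ u ∈ U', φ0' u = {μ | ∃ x ∈ f' u, AS.InitVal x μ})
    (hφ0'' : ∀ u ∈ U'', φ0'' u = {μ | ∃ x ∈ f'' u, AS.InitVal x μ})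
    (π' : (Fin n' → Bool) → (ℝ → Fin m → Bool) → Set (AS.PF n'))
    (π'' : (Fin n'' → Bool) → (ℝ → Fin m → Bool) → Set (AS.PF n''))
    (hπ' : ∀ u ∈ U', f' u = {x | ∃ μ ∈ φ0' u, ∃ ρ ∈ π' μ u, x = AS.PF.run Φ' ρ μ u})
    (hπ'' : ∀ u ∈ U'', f'' u = {x | ∃ μ ∈ φ0'' u, ∃ ρ ∈ π'' μ u, x = AS.PF.run Φ'' ρ μ u}) :
    ∀ u ∈ U' ∩ U'',
      (prodSet (f' u) (f'' u) ⊆ AS.Xi (AS.par Φ' Φ'') u) ∧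
      ({μ | ∃ z ∈ prodSet (f' u) (f'' u), AS.InitVal z μ} =
        {μ | ∃ μ' ∈ φ0' u, ∃ μ'' ∈ φ0'' u, μ = AS.app μ' μ''}) ∧
      (prodSet (f' u) (f'' u) =
        {z | ∃ μ' ∈ φ0' u, ∃ μ'' ∈ φ0'' u, ∃ ρ' ∈ π' μ' u, ∃ ρ'' ∈ π'' μ'' u,
          z = fun s => AS.app (AS.PF.run Φ' ρ' μ' u s) (AS.PF.run Φ'' ρ'' μ'' u s)}) := by
  rintro u ⟨hu', hu''⟩
  refine ⟨?_, ?_, ?_⟩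
  · -- regularity
    rintro z ⟨x', hx', x'', hx'', rfl⟩
    obtain ⟨μ', ρ1, rfl⟩ := hreg' u hu' hx'
    obtain ⟨μ'', ρ2, rfl⟩ := hreg'' u hu'' hx''
    obtain ⟨ρm, hρm⟩ := AS.exists_merge ρ1 ρ2
    exact ⟨AS.app μ' μ'', ρm, funext fun s => (hρm Φ' Φ'' μ' μ'' u s).symm⟩
  · -- initial state function
    ext μ
    simp only [Set.mem_setOf_eq]
    constructor
    · rintro ⟨z, ⟨x', hx', x'', hx'', rfl⟩, T, hT⟩
      refine ⟨AS.fstPart μ, ?_, AS.sndPart μ, ?_, (AS.app_fstPart_sndPart μ).symm⟩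
      · rw [hφ0' u hu']
        refine ⟨x', hx', T, fun s hs => ?_⟩
        exact (AS.fstPart_app (x' s) (x'' s)).symm.trans (congrArg AS.fstPart (hT s hs))
      · rw [hφ0'' u hu'']
        refine ⟨x'', hx'', T, fun s hs => ?_⟩
        exact (AS.sndPart_app (x' s) (x'' s)).symm.trans (congrArg AS.sndPart (hT s hs))
    · rintro ⟨μ', hμ', μ'', hμ'', rfl⟩
      rw [hφ0' u hu'] at hμ'
      obtain ⟨x', hx', T1, hT1⟩ := hμ'
      rw [hφ0'' u hu''] at hμ''
      obtain ⟨x'', hx'', T2, hT2⟩ := hμ''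
      refine ⟨_, ⟨x', hx', x'', hx'', rfl⟩, min T1 T2, fun s hs => ?_⟩
      show AS.app (x' s) (x'' s) = _
      rw [hT1 s (hs.trans_le (min_le_left _ _)), hT2 s (hs.trans_le (min_le_right _ _))]
  · -- computation function
    ext z
    simp only [prodSet, Set.mem_setOf_eq]
    constructor
    · rintro ⟨x', hx', x'', hx'', rfl⟩
      rw [hπ' u hu'] at hx'
      obtain ⟨μ', hμ', ρ1, hρ1, rfl⟩ := hx'
      rw [hπ'' u hu''] at hx''
      obtain ⟨μ'', hμ'', ρ2, hρ2, rfl⟩ := hx''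
      exact ⟨μ', hμ', μ'', hμ'', ρ1, hρ1, ρ2, hρ2, rfl⟩
    · rintro ⟨μ', hμ', μ'', hμ'', ρ1, hρ1, ρ2, hρ2, rfl⟩
      refine ⟨AS.PF.run Φ' ρ1 μ' u, ?_, AS.PF.run Φ'' ρ2 μ'' u, ?_, rfl⟩
      · rw [hπ' u hu']; exact ⟨μ', hμ', ρ1, hρ1, rfl⟩
      · rw [hπ'' u hu'']; exact ⟨μ'', hμ'', ρ2, hρ2, rfl⟩
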